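/- arXiv:2508.01607 — 7 statements merged into one kernel-verified Lean document; each statement's English description precedes it below -/
import Mathlib

section
/- Let X be a metric space with distance |·|, and let f : X → ℝ be a positive α-Lipschitz function with α > 0. Then d(x,y) = log(1 + α|x−y| / min(f(x), f(y))) defines a metric on X. -/
noncomputable def dfun {X : Type*} [MetricSpace X] (f : X → ℝ) (α : ℝ) (x y : X) : ℝ :=
  Real.log (1 + α * dist x y / min (f x) (f y))

lemma dfun_symm {X : Type*} [MetricSpace X] (f : X → ℝ) (α : ℝ) (x y : X) :
    dfun f α x y = dfun f α y x := by
  unfold dfun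
  rw [dist_comm, min_comm]

lemma dfun_tri_aux {X : Type*} [MetricSpace X] (f : X → ℝ) (α : ℝ) (hα : 0 < α)
    (hpos : ∀ x, 0 < f x) (hlip : ∀ x y, |f x - f y| ≤ α * dist x y)
    (x y z : X) (hxz : f x ≤ f z) :
    dfun f α x z ≤ dfun f α x y + dfun f α y z := by
  have hfx := hpos x; have hfy := hpos y; have hfz := hpos z
  have hm1 : (0:ℝ) < min (f x) (f y) := lt_min hfx hfy
  have hm2 : (0:ℝ) < min (f y) (f z) := lt_min hfy hfz
  have hmin : min (f x) (f z) = f x := min_eq_left hxz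
  set a := dist x y with ha
  set b := dist y z with hb
  set c := dist x z with hc
  have ha0 : 0 ≤ a := dist_nonneg
  have hb0 : 0 ≤ b := dist_nonneg
  have htri : c ≤ a + b := dist_triangle x y z
  have hfy_le : f y ≤ f x + α * a := by
    have := hlip y x
    rw [dist_comm] at this
    have := abs_le.mp this
    linarith [this.2]
  have hB : (0:ℝ) < 1 + α * a / min (f x) (f y) := by positivity
  have hC : (0:ℝ) < 1 + α * b / min (f y) (f z) := by positivity
  have hA : (0:ℝ) < 1 + α * c / min (f x) (f z) := by positivity
  have key : 1 + α * c / min (f x) (f z) ≤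
      (1 + α * a / min (f x) (f y)) * (1 + α * b / min (f y) (f z)) := by
    rw [hmin]
    have h1 : min (f x) (f y) ≤ f x := min_le_left _ _
    have h2 : min (f y) (f z) ≤ f x + α * a := (min_le_left _ _).trans hfy_le
    set m1 := min (f x) (f y) with hm1d
    set m2 := min (f y) (f z) with hm2d
    have hm1' : m1 > 0 := hm1
    have hm2' : m2 > 0 := hm2
    have hne1 : m1 ≠ 0 := ne_of_gt hm1'
    have hne2 : m2 ≠ 0 := ne_of_gt hm2'
    have hnex : f x ≠ 0 := ne_of_gt hfx
    rw [show (1:ℝ) + α * c / f x = (f x + α * c) / f x by field_simp,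
        show (1:ℝ) + α * a / m1 = (m1 + α * a) / m1 by field_simp,
        show (1:ℝ) + α * b / m2 = (m2 + α * b) / m2 by field_simp,
        div_mul_div_comm, div_le_div_iff₀ hfx (by positivity)]
    nlinarith [mul_nonneg (mul_nonneg ha0 (sub_nonneg.mpr h1)) hm2'.le,
      mul_nonneg (mul_nonneg hb0 hm1'.le) (sub_nonneg.mpr h2),
      mul_nonneg (mul_nonneg (mul_nonneg hα.le ha0) hb0) (sub_nonneg.mpr h1),
      mul_nonneg (mul_nonneg (sub_nonneg.mpr htri) (mul_nonneg hα.le hm1'.le)) hm2'.le]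
  unfold dfun
  calc Real.log (1 + α * c / min (f x) (f z))
      ≤ Real.log ((1 + α * a / min (f x) (f y)) * (1 + α * b / min (f y) (f z))) :=
        Real.log_le_log hA key
    _ = _ := Real.log_mul (ne_of_gt hB) (ne_of_gt hC)

theorem stmt_0 {X : Type*} [MetricSpace X] (f : X → ℝ) (α : ℝ) (hα : 0 < α)
    (hpos : ∀ x, 0 < f x) (hlip : ∀ x y, |f x - f y| ≤ α * dist x y) :
    (∀ x y, dfun f α x y = dfun f α y x) ∧
    (∀ x y, 0 ≤ dfun f α x y) ∧
    (∀ x y, dfun f α x y = 0 ↔ x = y) ∧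
    (∀ x y z, dfun f α x z ≤ dfun f α x y + dfun f α y z) := by
  have hmpos : ∀ x y : X, (0:ℝ) < min (f x) (f y) := fun x y => lt_min (hpos x) (hpos y)
  refine ⟨dfun_symm f α, ?_, ?_, ?_⟩
  · intro x y
    unfold dfun
    apply Real.log_nonneg
    have : 0 ≤ α * dist x y / min (f x) (f y) :=
      div_nonneg (mul_nonneg hα.le dist_nonneg) (hmpos x y).le
    linarith
  · intro x y
    unfold dfun
    constructor
    · intro h
      have h0 : 0 ≤ α * dist x y / min (f x) (f y) :=
        div_nonneg (mul_nonneg hα.le dist_nonneg) (hmpos x y).le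
      have h1 : (0:ℝ) < 1 + α * dist x y / min (f x) (f y) := by linarith
      have := Real.exp_log h1
      rw [h, Real.exp_zero] at this
      have hd : α * dist x y / min (f x) (f y) = 0 := by linarith
      rw [div_eq_zero_iff] at hd
      rcases hd with hd | hd
      · rcases mul_eq_zero.mp hd with hd | hd
        · exact absurd hd (ne_of_gt hα)
        · exact dist_eq_zero.mp hd
      · exact absurd hd (ne_of_gt (hmpos x y))
    · intro h
      subst h
      simp [dist_self]
  · intro x y z
    rcases le_total (f x) (f z) with h | h
    · exact dfun_tri_aux f α hα hpos hlip x y z h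
    · have := dfun_tri_aux f α hα hpos hlip z y x h
      rw [dfun_symm f α x z, dfun_symm f α x y, dfun_symm f α y z]
      linarith
end

section
/- Let X be a metric space with distance |·|, and let f : X → ℝ be a positive α-Lipschitz function with α > 0. Then d'(x,y) = (1/2)·log((1 + α|x−y|/f(x))·(1 + α|x−y|/f(y))) defines a metric on X. -/
noncomputable def dfun' {X : Type*} [MetricSpace X] (f : X → ℝ) (α : ℝ) (x y : X) : ℝ :=
  (1 / 2) * Real.log ((1 + α * dist x y / f x) * (1 + α * dist x y / f y))

lemma key_factor (u v a b c α : ℝ) (hu : 0 < u) (hv : 0 < v) (ha : 0 ≤ a) (hb : 0 ≤ b)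
    (hα : 0 < α) (hc : c ≤ a + b) (hl : v - u ≤ α * a) :
    1 + α * c / u ≤ (1 + α * a / u) * (1 + α * b / v) := by
  have h0 : (1 + α * c / u) = (u + α * c) / u := by field_simp
  have h1 : (1 + α * a / u) = (u + α * a) / u := by field_simp
  have h2 : (1 + α * b / v) = (v + α * b) / v := by field_simp
  rw [h0, h1, h2, div_mul_div_comm, div_le_div_iff₀ hu (mul_pos hu hv)]
  nlinarith [mul_nonneg (mul_nonneg hα.le hu.le)
      (mul_nonneg hb (show (0:ℝ) ≤ u + α * a - v by linarith)),
    mul_le_mul_of_nonneg_left (mul_le_mul_of_nonneg_right hc hv.le)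
      (mul_nonneg hα.le hu.le)]

theorem stmt_1 {X : Type*} [MetricSpace X] (f : X → ℝ) (α : ℝ) (hα : 0 < α)
    (hpos : ∀ x, 0 < f x) (hlip : ∀ x y, |f x - f y| ≤ α * dist x y) :
    (∀ x y, dfun' f α x y = dfun' f α y x) ∧
    (∀ x y, 0 ≤ dfun' f α x y) ∧
    (∀ x y, dfun' f α x y = 0 ↔ x = y) ∧
    (∀ x y z, dfun' f α x z ≤ dfun' f α x y + dfun' f α y z) := by
  have hnn : ∀ (x : X) (d : ℝ), 0 ≤ d → 0 ≤ α * d / f x := fun x d hd =>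
    div_nonneg (mul_nonneg hα.le hd) (hpos x).le
  have hone : ∀ x y : X, (1:ℝ) ≤ 1 + α * dist x y / f x := by
    intro x y
    have := hnn x (dist x y) dist_nonneg
    linarith
  refine ⟨?_, ?_, ?_, ?_⟩
  · intro x y
    unfold dfun'
    rw [dist_comm]
    ring_nf
  · intro x y
    unfold dfun'
    have h1 := hone x y
    have h2 := hone y x
    rw [dist_comm y x] at h2
    have : (1:ℝ) ≤ (1 + α * dist x y / f x) * (1 + α * dist x y / f y) := by nlinarith
    have := Real.log_nonneg this
    linarith
  · intro x y
    constructor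
    · intro h
      unfold dfun' at h
      have h1 := hone x y
      have h2 := hone y x
      rw [dist_comm y x] at h2
      have hprod : (1:ℝ) ≤ (1 + α * dist x y / f x) * (1 + α * dist x y / f y) := by nlinarith
      have hlog : Real.log ((1 + α * dist x y / f x) * (1 + α * dist x y / f y)) = 0 := by
        linarith
      have := Real.exp_log (by linarith : (0:ℝ) < (1 + α * dist x y / f x) * (1 + α * dist x y / f y))
      rw [hlog, Real.exp_zero] at this
      have hd : dist x y = 0 := by
        by_contra hne
        have hd' : 0 < dist x y := lt_of_le_of_ne dist_nonneg (Ne.symm hne)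
        have : 1 < 1 + α * dist x y / f x := by
          have : 0 < α * dist x y / f x :=
            div_pos (mul_pos hα hd') (hpos x)
          linarith
        nlinarith
      exact dist_eq_zero.mp hd
    · intro h
      subst h
      unfold dfun'
      simp
  · intro x y z
    unfold dfun'
    set a := dist x y
    set b := dist y z
    set c := dist x z
    have ha : 0 ≤ a := dist_nonneg
    have hb : 0 ≤ b := dist_nonneg
    have hc : c ≤ a + b := dist_triangle x y z
    have hA : 1 + α * c / f x ≤ (1 + α * a / f x) * (1 + α * b / f y) := by
      apply key_factor _ _ _ _ _ _ (hpos x) (hpos y) ha hb hα hc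
      have := hlip y x
      rw [dist_comm y x] at this
      have := abs_le.mp this
      linarith [this.2]
    have hB : 1 + α * c / f z ≤ (1 + α * b / f z) * (1 + α * a / f y) := by
      apply key_factor _ _ _ _ _ _ (hpos z) (hpos y) hb ha hα (by linarith)
      have := abs_le.mp (hlip y z)
      linarith [this.2]
    have p1 : (0:ℝ) < 1 + α * c / f x := by have := hnn x c (by simp [a,b,c, dist_nonneg]); linarith
    have p2 : (0:ℝ) < 1 + α * c / f z := by have := hnn z c (by simp [a,b,c, dist_nonneg]); linarith
    have p3 : (0:ℝ) < 1 + α * a / f x := by have := hnn x a (by simp [a,b,c, dist_nonneg]); linarith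
    have p4 : (0:ℝ) < 1 + α * a / f y := by have := hnn y a (by simp [a,b,c, dist_nonneg]); linarith
    have p5 : (0:ℝ) < 1 + α * b / f y := by have := hnn y b (by simp [a,b,c, dist_nonneg]); linarith
    have p6 : (0:ℝ) < 1 + α * b / f z := by have := hnn z b (by simp [a,b,c, dist_nonneg]); linarith
    have hmul : (1 + α * c / f x) * (1 + α * c / f z) ≤
        ((1 + α * a / f x) * (1 + α * a / f y)) * ((1 + α * b / f y) * (1 + α * b / f z)) := by
      calc (1 + α * c / f x) * (1 + α * c / f z)
          ≤ ((1 + α * a / f x) * (1 + α * b / f y)) * ((1 + α * b / f z) * (1 + α * a / f y)) :=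
            mul_le_mul hA hB p2.le (by positivity)
        _ = ((1 + α * a / f x) * (1 + α * a / f y)) * ((1 + α * b / f y) * (1 + α * b / f z)) := by
            ring
    have hlog := Real.log_le_log (mul_pos p1 p2) hmul
    rw [Real.log_mul (by positivity : ((1 + α * a / f x) * (1 + α * a / f y)) ≠ 0)
      (by positivity : ((1 + α * b / f y) * (1 + α * b / f z)) ≠ 0)] at hlog
    linarith
end

section
/- Let D ⊊ ℝⁿ be a bounded domain with diameter d. With j_D(x,y) = log(1 + |x−y| / min(δ(x), δ(y))) and ζ_D(x,y) = log(1 + d·|x−y| / min(η(x), η(y))), we have j_D(x,y) ≤ ζ_D(x,y) ≤ 2·j_D(x,y) for all x, y ∈ D. -/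
noncomputable def deltaD {n : ℕ} (D : Set (EuclideanSpace ℝ (Fin n)))
    (z : EuclideanSpace ℝ (Fin n)) : ℝ :=
  Metric.infDist z (frontier D)

noncomputable def etaD {n : ℕ} (D : Set (EuclideanSpace ℝ (Fin n)))
    (z : EuclideanSpace ℝ (Fin n)) : ℝ :=
  deltaD D z * (Metric.diam D - deltaD D z)

noncomputable def zetaD {n : ℕ} (D : Set (EuclideanSpace ℝ (Fin n)))
    (x y : EuclideanSpace ℝ (Fin n)) : ℝ :=
  Real.log (1 + Metric.diam D * dist x y / min (etaD D x) (etaD D y))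

noncomputable def zetaD' {n : ℕ} (D : Set (EuclideanSpace ℝ (Fin n)))
    (x y : EuclideanSpace ℝ (Fin n)) : ℝ :=
  (1 / 2) * Real.log ((1 + Metric.diam D * dist x y / etaD D x) *
    (1 + Metric.diam D * dist x y / etaD D y))

noncomputable def jD {n : ℕ} (D : Set (EuclideanSpace ℝ (Fin n)))
    (x y : EuclideanSpace ℝ (Fin n)) : ℝ :=
  Real.log (1 + dist x y / min (deltaD D x) (deltaD D y))

lemma deltaD_pos {n : ℕ} {D : Set (EuclideanSpace ℝ (Fin n))}
    (hopen : IsOpen D) (hne : D.Nonempty) (hproper : D ≠ Set.univ)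
    {z : EuclideanSpace ℝ (Fin n)} (hz : z ∈ D) : 0 < deltaD D z := by
  have hfr : (frontier D).Nonempty := nonempty_frontier_iff.2 ⟨hne, hproper⟩
  have hzn : z ∉ frontier D := by
    rw [hopen.frontier_eq]
    exact fun h => h.2 hz
  exact (isClosed_frontier.notMem_iff_infDist_pos hfr).1 hzn

lemma deltaD_eq_compl {n : ℕ} {D : Set (EuclideanSpace ℝ (Fin n))}
    (hopen : IsOpen D) (hne : D.Nonempty) (hproper : D ≠ Set.univ)
    {z : EuclideanSpace ℝ (Fin n)} (hz : z ∈ D) :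
    deltaD D z = Metric.infDist z Dᶜ := by
  obtain ⟨w, hw, hd⟩ := exists_mem_frontier_infDist_compl_eq_dist hz hproper
  refine le_antisymm ?_ ?_
  · rw [hd]; exact Metric.infDist_le_dist_of_mem hw
  · have hsub : frontier D ⊆ Dᶜ := by
      rw [hopen.frontier_eq]; exact fun a ha => ha.2
    have hfr : (frontier D).Nonempty := nonempty_frontier_iff.2 ⟨hne, hproper⟩
    exact Metric.infDist_le_infDist_of_subset hsub hfr

lemma two_deltaD_le_diam {n : ℕ} (hn : 2 ≤ n) {D : Set (EuclideanSpace ℝ (Fin n))}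
    (hopen : IsOpen D) (hne : D.Nonempty) (hproper : D ≠ Set.univ)
    (hbdd : Bornology.IsBounded D)
    {z : EuclideanSpace ℝ (Fin n)} (hz : z ∈ D) :
    2 * deltaD D z ≤ Metric.diam D := by
  set δ := deltaD D z with hδ
  by_contra h
  push_neg at h
  set r : ℝ := (Metric.diam D / 2 + δ) / 2 with hr
  have hδpos := deltaD_pos hopen hne hproper hz
  have hdn : 0 ≤ Metric.diam D := Metric.diam_nonneg
  have hr1 : Metric.diam D / 2 < r := by rw [hr]; linarith
  have hr2 : r < δ := by rw [hr]; linarith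
  have hrpos : 0 < r := by linarith
  set e : EuclideanSpace ℝ (Fin n) := EuclideanSpace.single (⟨0, by omega⟩ : Fin n) (1 : ℝ)
  have he : ‖e‖ = 1 := by simp [e, EuclideanSpace.norm_single]
  have hball : Metric.ball z δ ⊆ D := by
    rw [hδ, deltaD_eq_compl hopen hne hproper hz]
    exact Metric.ball_infDist_compl_subset
  have h1 : z + r • e ∈ D := by
    apply hball
    rw [Metric.mem_ball, dist_eq_norm]
    have : z + r • e - z = r • e := by abel
    rw [this, norm_smul, he]
    simpa [abs_of_pos hrpos] using hr2
  have h2 : z - r • e ∈ D := by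
    apply hball
    rw [Metric.mem_ball, dist_eq_norm]
    have : z - r • e - z = (-r) • e := by
      rw [neg_smul]; abel
    rw [this, norm_smul, he]
    simpa [abs_of_pos hrpos] using hr2
  have hdist : dist (z + r • e) (z - r • e) = 2 * r := by
    rw [dist_eq_norm]
    have : z + r • e - (z - r • e) = (2 * r) • e := by
      rw [two_mul, add_smul]; abel
    rw [this, norm_smul, he]
    simp [abs_of_pos hrpos]
  have := Metric.dist_le_diam_of_mem hbdd h1 h2
  rw [hdist] at this
  linarith

theorem stmt_9 {n : ℕ} (hn : 2 ≤ n) (D : Set (EuclideanSpace ℝ (Fin n)))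
    (hopen : IsOpen D) (hconn : IsConnected D) (hproper : D ≠ Set.univ)
    (hbdd : Bornology.IsBounded D)
    (x y : EuclideanSpace ℝ (Fin n)) (hx : x ∈ D) (hy : y ∈ D) :
    jD D x y ≤ zetaD D x y ∧ zetaD D x y ≤ 2 * jD D x y := by
  have hne : D.Nonempty := hconn.nonempty
  set d := Metric.diam D with hd
  set dx := deltaD D x with hdx
  set dy := deltaD D y with hdy
  have hdxp : 0 < dx := deltaD_pos hopen hne hproper hx
  have hdyp : 0 < dy := deltaD_pos hopen hne hproper hy
  have hdxd : 2 * dx ≤ d := two_deltaD_le_diam hn hopen hne hproper hbdd hx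
  have hdyd : 2 * dy ≤ d := two_deltaD_le_diam hn hopen hne hproper hbdd hy
  have hdpos : 0 < d := by linarith
  set t := dist x y with ht
  have htn : 0 ≤ t := dist_nonneg
  set a := min dx dy with ha
  have hap : 0 < a := lt_min hdxp hdyp
  set m := min (etaD D x) (etaD D y) with hm
  have hex : etaD D x = dx * (d - dx) := rfl
  have hey : etaD D y = dy * (d - dy) := rfl
  have hmp : 0 < m := by
    apply lt_min
    · rw [hex]; apply mul_pos hdxp; linarith
    · rw [hey]; apply mul_pos hdyp; linarith
  have hmle : m ≤ d * a := by
    have h1 : etaD D x ≤ d * dx := by rw [hex]; nlinarith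
    have h2 : etaD D y ≤ d * dy := by rw [hey]; nlinarith
    calc m ≤ min (d * dx) (d * dy) := min_le_min h1 h2
      _ = d * a := by rw [ha, mul_min_of_nonneg _ _ hdpos.le]
  have hmge : d / 2 * a ≤ m := by
    have h1 : d / 2 * dx ≤ etaD D x := by rw [hex]; nlinarith
    have h2 : d / 2 * dy ≤ etaD D y := by rw [hey]; nlinarith
    calc d / 2 * a = min (d / 2 * dx) (d / 2 * dy) := by
          rw [ha, mul_min_of_nonneg _ _ (by linarith : (0:ℝ) ≤ d / 2)]
      _ ≤ m := min_le_min h1 h2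
  have hjz : jD D x y = Real.log (1 + t / a) := rfl
  have hzz : zetaD D x y = Real.log (1 + d * t / m) := rfl
  have hs : 0 ≤ t / a := div_nonneg htn hap.le
  constructor
  · rw [hjz, hzz]
    apply Real.log_le_log (by linarith)
    have : t / a ≤ d * t / m := by
      rw [show t / a = d * t / (d * a) by
        rw [mul_div_mul_left t a (ne_of_gt hdpos)]]
      apply div_le_div_of_nonneg_left (by positivity) hmp hmle
    linarith
  · rw [hjz, hzz]
    have hkey : 1 + d * t / m ≤ (1 + t / a) ^ 2 := by
      have h1 : d * t / m ≤ 2 * (t / a) := by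
        have : d * t / m ≤ d * t / (d / 2 * a) := by
          apply div_le_div_of_nonneg_left (by positivity) (by positivity) hmge
        calc d * t / m ≤ d * t / (d / 2 * a) := this
          _ = 2 * (t / a) := by field_simp
      nlinarith
    calc Real.log (1 + d * t / m) ≤ Real.log ((1 + t / a) ^ 2) :=
          Real.log_le_log (by
            have := div_nonneg (mul_nonneg hdpos.le htn) hmp.le; linarith) hkey
      _ = 2 * Real.log (1 + t / a) := by
          rw [Real.log_pow]; norm_num
end

section
/- Let D ⊊ ℝⁿ be a bounded domain with diameter d, and let x, y ∈ D with y in the open ball B(x, δ(x)). Then the infimal-length metric m_D with density d/η(z) satisfies m_D(x,y) ≤ log(1 + d·|x−y| / (η(x) − d·|x−y|)), provided d·|x−y| < η(x). -/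
/-- The length of a C¹ path with respect to the density `diam D / η`. -/
noncomputable def mLength {n : ℕ} (D : Set (EuclideanSpace ℝ (Fin n)))
    (γ : ℝ → EuclideanSpace ℝ (Fin n)) : ℝ :=
  ∫ t in (0:ℝ)..1, (Metric.diam D / etaD D (γ t)) * ‖deriv γ t‖

/-- The infimal path-length metric `m_D` with density `diam D / η(z)`. -/
noncomputable def mDist {n : ℕ} (D : Set (EuclideanSpace ℝ (Fin n)))
    (x y : EuclideanSpace ℝ (Fin n)) : ℝ :=
  sInf { L : ℝ | ∃ γ : ℝ → EuclideanSpace ℝ (Fin n),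
    ContDiffOn ℝ 1 γ (Set.Icc 0 1) ∧ γ 0 = x ∧ γ 1 = y ∧
    (∀ t ∈ Set.Icc (0:ℝ) 1, γ t ∈ D) ∧ L = mLength D γ }

-- ball x (deltaD D x) ⊆ D
lemma aux_ball_subset {n : ℕ} {D : Set (EuclideanSpace ℝ (Fin n))}
    (hopen : IsOpen D) {x : EuclideanSpace ℝ (Fin n)} (hx : x ∈ D) :
    Metric.ball x (deltaD D x) ⊆ D := by
  rcases le_or_gt (deltaD D x) 0 with h | h
  · simp [Metric.ball_eq_empty.2 h]
  · have hdisj : Disjoint (frontier D) (Metric.ball x (deltaD D x)) := by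
      rw [Set.disjoint_right]
      intro z hz
      exact fun hzf => (Metric.ball_infDist_subset_compl hz) hzf
    have hclopen := isClopen_preimage_val hopen hdisj
    have hpc : IsPreconnected (Metric.ball x (deltaD D x)) :=
      (convex_ball x (deltaD D x)).isPreconnected
    haveI := Subtype.preconnectedSpace hpc
    have hxmem : x ∈ Metric.ball x (deltaD D x) := Metric.mem_ball_self h
    have huniv := hclopen.eq_univ ⟨⟨x, hxmem⟩, hx⟩
    intro z hz
    have h2 : (⟨z, hz⟩ : Metric.ball x (deltaD D x)) ∈ (Subtype.val ⁻¹' D) :=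
      huniv ▸ Set.mem_univ _
    exact h2

lemma aux_two_delta_le {n : ℕ} (hn : 1 ≤ n) {D : Set (EuclideanSpace ℝ (Fin n))}
    (hopen : IsOpen D) (hbdd : Bornology.IsBounded D)
    {z : EuclideanSpace ℝ (Fin n)} (hz : z ∈ D) :
    2 * deltaD D z ≤ Metric.diam D := by
  haveI : NeZero n := ⟨by omega⟩
  set e : EuclideanSpace ℝ (Fin n) := EuclideanSpace.single (0 : Fin n) (1 : ℝ) with he
  have hne : ‖e‖ = 1 := by simp [he]
  have key : ∀ r : ℝ, 0 ≤ r → r < deltaD D z → 2 * r ≤ Metric.diam D := by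
    intro r hr0 hr
    have h1 : z + r • e ∈ D := by
      apply aux_ball_subset hopen hz
      simp only [Metric.mem_ball, dist_eq_norm, add_sub_cancel_left, norm_smul, hne]
      simpa [abs_of_nonneg hr0] using hr
    have h2 : z - r • e ∈ D := by
      apply aux_ball_subset hopen hz
      simp only [Metric.mem_ball, dist_eq_norm, sub_sub_cancel_left, norm_neg, norm_smul, hne]
      simpa [abs_of_nonneg hr0] using hr
    have hd : dist (z + r • e) (z - r • e) = 2 * r := by
      rw [dist_eq_norm]
      have : (z + r • e) - (z - r • e) = (2 * r) • e := by
        module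
      rw [this, norm_smul, hne]
      rw [Real.norm_eq_abs, abs_of_nonneg (by linarith : (0:ℝ) ≤ 2 * r), mul_one]
    have := Metric.dist_le_diam_of_mem hbdd h1 h2
    linarith [hd ▸ this]
  by_contra hcon
  push_neg at hcon
  have hδ0 : 0 ≤ deltaD D z := Metric.infDist_nonneg
  have hd0 : 0 ≤ Metric.diam D := Metric.diam_nonneg
  have := key ((Metric.diam D + 2 * deltaD D z) / 4) (by linarith) (by linarith)
  linarith

set_option maxHeartbeats 2000000 in
theorem stmt_14 {n : ℕ} (hn : 2 ≤ n) (D : Set (EuclideanSpace ℝ (Fin n)))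
    (hopen : IsOpen D) (hconn : IsConnected D) (hproper : D ≠ Set.univ)
    (hbdd : Bornology.IsBounded D)
    (x y : EuclideanSpace ℝ (Fin n)) (hx : x ∈ D) (hy : y ∈ D)
    (hball : y ∈ Metric.ball x (deltaD D x))
    (hsmall : Metric.diam D * dist x y < etaD D x) :
    mDist D x y ≤
      Real.log (1 + Metric.diam D * dist x y /
        (etaD D x - Metric.diam D * dist x y)) := by
  set d := Metric.diam D with hd
  set δ := deltaD D x with hδdef
  set s := dist x y with hsdef
  have hηx : etaD D x = δ * (d - δ) := rfl
  rw [hηx] at hsmall ⊢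
  -- basic positivity facts
  have hfr : (frontier D).Nonempty := by
    rw [nonempty_frontier_iff]; exact ⟨⟨x, hx⟩, hproper⟩
  have hxf : x ∉ frontier D := by
    intro hxf; rw [hopen.frontier_eq] at hxf; exact hxf.2 hx
  have hδ0 : 0 < δ := (isClosed_frontier.notMem_iff_infDist_pos hfr).1 hxf
  have hs0 : 0 ≤ s := dist_nonneg
  have hsδ : s < δ := by rw [hsdef, dist_comm]; exact Metric.mem_ball.1 hball
  have h2δ : 2 * δ ≤ d := aux_two_delta_le (by omega) hopen hbdd hx
  have hd0 : 0 < d := by linarith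
  have hb0 : 0 < d - δ := by linarith
  have ha1 : 0 < δ - s := by linarith
  have hsmall' : d * s < δ * (d - δ) := hsmall
  have hden0 : 0 < δ * (d - δ) - d * s := by linarith
  -- the straight segment
  set v : EuclideanSpace ℝ (Fin n) := y - x with hv
  set γ : ℝ → EuclideanSpace ℝ (Fin n) := fun t => x + t • v with hγ
  have hvnorm : ‖v‖ = s := by rw [hsdef, dist_eq_norm, hv, norm_sub_rev]
  have hγ0 : γ 0 = x := by simp [hγ]
  have hγ1 : γ 1 = y := by simp [hγ, hv]
  have hderiv : ∀ t : ℝ, HasDerivAt γ v t := by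
    intro t
    have h := ((hasDerivAt_id t).smul_const v).const_add x
    rw [hγ]; simpa using h
  have hderiv' : ∀ t : ℝ, deriv γ t = v := fun t => (hderiv t).deriv
  have hdistγ : ∀ t : ℝ, dist (γ t) x = |t| * s := by
    intro t
    rw [dist_eq_norm]
    have : γ t - x = t • v := by simp [hγ]
    rw [this, norm_smul, hvnorm, Real.norm_eq_abs]
  have hmemD : ∀ t ∈ Set.Icc (0:ℝ) 1, γ t ∈ D := by
    intro t ht
    apply aux_ball_subset hopen hx
    rw [Metric.mem_ball, hdistγ t, abs_of_nonneg ht.1]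
    have : t * s ≤ s := by nlinarith [ht.2]
    linarith
  have hδγ : ∀ t ∈ Set.Icc (0:ℝ) 1, δ - t * s ≤ deltaD D (γ t) := by
    intro t ht
    have h := Metric.infDist_le_infDist_add_dist (x := x) (y := γ t) (s := frontier D)
    rw [dist_comm, hdistγ t, abs_of_nonneg ht.1] at h
    simp only [deltaD] at *
    linarith
  have hηγ : ∀ t ∈ Set.Icc (0:ℝ) 1,
      (δ - t * s) * (d - δ + t * s) ≤ etaD D (γ t) ∧
        0 < (δ - t * s) * (d - δ + t * s) := by
    intro t ht
    have h1 := hδγ t ht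
    have h2 : 2 * deltaD D (γ t) ≤ d := aux_two_delta_le (by omega) hopen hbdd (hmemD t ht)
    have hts : t * s ≤ s := by nlinarith [ht.2, ht.1]
    have hts0 : 0 ≤ t * s := mul_nonneg ht.1 hs0
    have ha : 0 < δ - t * s := by linarith
    constructor
    · show (δ - t * s) * (d - δ + t * s) ≤ deltaD D (γ t) * (d - deltaD D (γ t))
      nlinarith [h1, h2, ha]
    · apply mul_pos ha; linarith
  -- membership of the segment length in the defining set
  have hsmooth : ContDiffOn ℝ 1 γ (Set.Icc 0 1) :=
    (contDiff_const.add (contDiff_id.smul contDiff_const)).contDiffOn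
  have hmemS : mLength D γ ∈ { L : ℝ | ∃ γ' : ℝ → EuclideanSpace ℝ (Fin n),
      ContDiffOn ℝ 1 γ' (Set.Icc 0 1) ∧ γ' 0 = x ∧ γ' 1 = y ∧
      (∀ t ∈ Set.Icc (0:ℝ) 1, γ' t ∈ D) ∧ L = mLength D γ' } :=
    ⟨γ, hsmooth, hγ0, hγ1, hmemD, rfl⟩
  have hbddS : BddBelow { L : ℝ | ∃ γ' : ℝ → EuclideanSpace ℝ (Fin n),
      ContDiffOn ℝ 1 γ' (Set.Icc 0 1) ∧ γ' 0 = x ∧ γ' 1 = y ∧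
      (∀ t ∈ Set.Icc (0:ℝ) 1, γ' t ∈ D) ∧ L = mLength D γ' } := by
    refine ⟨0, ?_⟩
    rintro L ⟨γ', _, _, _, hγ'mem, rfl⟩
    apply intervalIntegral.integral_nonneg zero_le_one
    intro t ht
    have h1 : γ' t ∈ D := hγ'mem t ht
    have h2 : 0 ≤ deltaD D (γ' t) := Metric.infDist_nonneg
    have h3 : 2 * deltaD D (γ' t) ≤ d := aux_two_delta_le (by omega) hopen hbdd h1
    have h4 : 0 ≤ etaD D (γ' t) := mul_nonneg h2 (by linarith)
    exact mul_nonneg (div_nonneg hd0.le h4) (norm_nonneg _)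
  have hstep0 : mDist D x y ≤ mLength D γ := csInf_le hbddS hmemS
  -- rewrite the length of the segment
  have hLrw : mLength D γ = ∫ t in (0:ℝ)..1, (d / etaD D (γ t)) * s := by
    apply intervalIntegral.integral_congr
    intro t _
    simp only
    rw [hderiv' t, hvnorm]
  -- continuity facts
  have hγcont : Continuous γ := by
    apply continuous_const.add (continuous_id.smul continuous_const)
  have hηcont : Continuous fun t => etaD D (γ t) := by
    have h := (Metric.continuous_infDist_pt (frontier D)).comp hγcont
    exact h.mul (continuous_const.sub h)
  have hFint : IntervalIntegrable (fun t => (d / etaD D (γ t)) * s)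
      MeasureTheory.volume 0 1 := by
    apply ContinuousOn.intervalIntegrable
    rw [Set.uIcc_of_le zero_le_one]
    apply ContinuousOn.mul _ continuousOn_const
    apply ContinuousOn.div continuousOn_const hηcont.continuousOn
    intro t ht
    exact ne_of_gt (lt_of_lt_of_le (hηγ t ht).2 (hηγ t ht).1)
  have hgcont : ContinuousOn (fun t => d * s / ((δ - t * s) * (d - δ + t * s)))
      (Set.Icc (0:ℝ) 1) := by
    apply ContinuousOn.div continuousOn_const
    · exact ((continuousOn_const.sub (continuousOn_id.mul continuousOn_const)).mul
        (continuousOn_const.add (continuousOn_id.mul continuousOn_const)))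
    · intro t ht
      have := (hηγ t ht).2
      have h2 : 0 < d - δ + t * s := by nlinarith [mul_nonneg ht.1 hs0]
      positivity
  have hgint : IntervalIntegrable (fun t => d * s / ((δ - t * s) * (d - δ + t * s)))
      MeasureTheory.volume 0 1 := by
    apply ContinuousOn.intervalIntegrable
    rwa [Set.uIcc_of_le zero_le_one]
  -- pointwise comparison
  have hstep1 : (∫ t in (0:ℝ)..1, (d / etaD D (γ t)) * s) ≤
      ∫ t in (0:ℝ)..1, d * s / ((δ - t * s) * (d - δ + t * s)) := by
    apply intervalIntegral.integral_mono_on zero_le_one hFint hgint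
    intro t ht
    obtain ⟨hle, hpos⟩ := hηγ t ht
    have h1 : d / etaD D (γ t) ≤ d / ((δ - t * s) * (d - δ + t * s)) :=
      div_le_div_of_nonneg_left hd0.le hpos hle
    calc (d / etaD D (γ t)) * s ≤ (d / ((δ - t * s) * (d - δ + t * s))) * s :=
          mul_le_mul_of_nonneg_right h1 hs0
      _ = d * s / ((δ - t * s) * (d - δ + t * s)) := by ring
  -- explicit antiderivative
  have hG : ∀ t ∈ Set.uIcc (0:ℝ) 1,
      HasDerivAt (fun t => Real.log (d - δ + t * s) - Real.log (δ - t * s))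
        (d * s / ((δ - t * s) * (d - δ + t * s))) t := by
    rw [Set.uIcc_of_le zero_le_one]
    intro t ht
    have hts : t * s ≤ s := by nlinarith [ht.2, ht.1]
    have hts0 : 0 ≤ t * s := mul_nonneg ht.1 hs0
    have h1 : 0 < d - δ + t * s := by linarith
    have h2 : 0 < δ - t * s := by linarith
    have hu1 : HasDerivAt (fun t : ℝ => d - δ + t * s) s t := by
      simpa using ((hasDerivAt_id t).mul_const s).const_add (d - δ)
    have hu2 : HasDerivAt (fun t : ℝ => δ - t * s) (-s) t := by
      simpa using ((hasDerivAt_id t).mul_const s).const_sub δ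
    have hl1 := (Real.hasDerivAt_log h1.ne').comp t hu1
    have hl2 := (Real.hasDerivAt_log h2.ne').comp t hu2
    have h := hl1.sub hl2
    refine h.congr_deriv ?_
    field_simp [h1.ne', h2.ne']
    ring
  have hstep2 : (∫ t in (0:ℝ)..1, d * s / ((δ - t * s) * (d - δ + t * s))) =
      (Real.log (d - δ + 1 * s) - Real.log (δ - 1 * s)) -
        (Real.log (d - δ + 0 * s) - Real.log (δ - 0 * s)) :=
    intervalIntegral.integral_eq_sub_of_hasDerivAt hG hgint
  -- final estimate
  have hrhs : 1 + d * s / (δ * (d - δ) - d * s) =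
      (δ * (d - δ)) / (δ * (d - δ) - d * s) := by
    field_simp
    ring
  have hfinal : (Real.log (d - δ + 1 * s) - Real.log (δ - 1 * s)) -
        (Real.log (d - δ + 0 * s) - Real.log (δ - 0 * s)) ≤
      Real.log (1 + d * s / (δ * (d - δ) - d * s)) := by
    rw [hrhs]
    have hA : (0:ℝ) < δ * (d - δ + s) := by positivity
    have hB : (0:ℝ) < (δ - s) * (d - δ) := by positivity
    have lhs_eq : (Real.log (d - δ + 1 * s) - Real.log (δ - 1 * s)) -
        (Real.log (d - δ + 0 * s) - Real.log (δ - 0 * s)) =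
        Real.log ((δ * (d - δ + s)) / ((δ - s) * (d - δ))) := by
      rw [Real.log_div hA.ne' hB.ne', Real.log_mul hδ0.ne' (by linarith : (d - δ + s) ≠ 0),
        Real.log_mul ha1.ne' hb0.ne']
      ring_nf
    rw [lhs_eq]
    apply Real.log_le_log (by positivity)
    rw [div_le_div_iff₀ hB hden0]
    nlinarith [mul_nonneg (mul_nonneg hδ0.le hd0.le) (sq_nonneg s)]
  calc mDist D x y ≤ mLength D γ := hstep0
    _ = _ := hLrw
    _ ≤ _ := hstep1
    _ = _ := hstep2
    _ ≤ _ := hfinal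
end

section
/- Let D ⊊ ℝⁿ be a bounded domain with diameter d, fix s ∈ (0,1), and let x, y ∈ D with |x−y| < s·η(x)/d. Then m_D(x,y) ≤ (1/(1−s))·ζ_D(x,y). -/
lemma key_log {s u : ℝ} (hu0 : 0 ≤ u) (hus : u ≤ s) (hs1 : s < 1) :
    -Real.log (1 - u) ≤ (1 / (1 - s)) * Real.log (1 + u) := by
  have h1u : 0 < 1 - u := by linarith
  have h1s : 0 < 1 - s := by linarith
  have hlog0 : 0 ≤ -Real.log (1 - u) := by
    have := Real.log_nonpos (by linarith) (by linarith : 1 - u ≤ 1)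
    linarith
  have hconc := (strictConcaveOn_log_Ioi.concaveOn).2
    (Set.mem_Ioi.2 (by positivity : (0:ℝ) < 1 / (1 - u)))
    (Set.mem_Ioi.2 one_pos) (le_of_lt h1u) hu0 (by ring)
  rw [smul_eq_mul, smul_eq_mul, smul_eq_mul, smul_eq_mul, Real.log_one] at hconc
  have heq : (1 - u) * (1 / (1 - u)) + u * 1 = 1 + u := by field_simp
  rw [heq] at hconc
  have hlog : Real.log (1 / (1 - u)) = -Real.log (1 - u) := by
    rw [one_div, Real.log_inv]
  rw [hlog] at hconc
  rw [one_div, inv_mul_eq_div, le_div_iff₀ h1s]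
  have : -Real.log (1 - u) * (1 - s) ≤ -Real.log (1 - u) * (1 - u) :=
    mul_le_mul_of_nonneg_left (by linarith) hlog0
  linarith

set_option maxHeartbeats 1000000 in
theorem stmt_15 {n : ℕ} (hn : 2 ≤ n) (D : Set (EuclideanSpace ℝ (Fin n)))
    (hopen : IsOpen D) (hconn : IsConnected D) (hproper : D ≠ Set.univ)
    (hbdd : Bornology.IsBounded D)
    (s : ℝ) (hs : s ∈ Set.Ioo (0:ℝ) 1)
    (x y : EuclideanSpace ℝ (Fin n)) (hx : x ∈ D) (hy : y ∈ D)
    (hclose : dist x y < s * etaD D x / Metric.diam D) :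
    mDist D x y ≤ (1 / (1 - s)) * zetaD D x y := by
  obtain ⟨hs0, hs1⟩ := hs
  have hAeq : etaD D x = Metric.infDist x (frontier D) *
      (Metric.diam D - Metric.infDist x (frontier D)) := rfl
  set d := Metric.diam D with hd
  set r := dist x y with hrdef
  set a := Metric.infDist x (frontier D) with hadef
  set A := a * (d - a) with hAdef
  rw [hAeq] at hclose
  have hr0 : 0 ≤ r := dist_nonneg
  have hpos : 0 < s * A / d := lt_of_le_of_lt hr0 hclose
  have hd0 : 0 ≤ d := Metric.diam_nonneg
  have hdpos : 0 < d := by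
    rcases eq_or_lt_of_le hd0 with h | h
    · rw [← h] at hpos; simp at hpos
    · exact h
  have hApos : 0 < A := by
    by_contra h
    push_neg at h
    have h1 : s * A ≤ 0 := mul_nonpos_of_nonneg_of_nonpos hs0.le h
    have : s * A / d ≤ 0 := div_nonpos_of_nonpos_of_nonneg h1 hd0
    linarith
  have ha0 : 0 ≤ a := Metric.infDist_nonneg
  have hapos : 0 < a := by
    rcases mul_pos_iff.1 (hAdef ▸ hApos) with ⟨h1, _⟩ | ⟨h1, _⟩
    · exact h1
    · linarith
  have hbpos : 0 < d - a := by
    rcases mul_pos_iff.1 (hAdef ▸ hApos) with ⟨_, h2⟩ | ⟨h1, _⟩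
    · exact h2
    · linarith
  -- frontier nonempty and ball inside D
  obtain ⟨p, hpf, hpd⟩ := exists_mem_frontier_infDist_compl_eq_dist hx hproper
  have hfne : (frontier D).Nonempty := ⟨p, hpf⟩
  have haleq : a ≤ Metric.infDist x Dᶜ := hpd ▸ Metric.infDist_le_dist_of_mem hpf
  have hball : Metric.ball x a ⊆ D :=
    (Metric.ball_subset_ball haleq).trans Metric.ball_infDist_compl_subset
  -- delta ≤ diam on D
  have hdelta_le : ∀ z ∈ D, Metric.infDist z (frontier D) ≤ d := by
    intro z hz
    refine (Metric.infDist_le_dist_of_mem hpf).trans ?_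
    calc dist z p ≤ Metric.diam (closure D) :=
          Metric.dist_le_diam_of_mem hbdd.closure (subset_closure hz)
            (frontier_subset_closure hpf)
      _ = d := by rw [Metric.diam_closure]
  have heta_nonneg : ∀ z ∈ D, 0 ≤ etaD D z := by
    intro z hz
    have : etaD D z = Metric.infDist z (frontier D) *
        (d - Metric.infDist z (frontier D)) := rfl
    rw [this]
    exact mul_nonneg Metric.infDist_nonneg (by linarith [hdelta_le z hz])
  -- size relations
  have hdr : d * r < s * A := by
    have := (lt_div_iff₀ hdpos).1 hclose
    linarith [this]
  have hdrA : d * r < A := by nlinarith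
  have hrsa : r < s * a := by
    have h1 : s * A / d ≤ s * a := by
      rw [div_le_iff₀ hdpos, hAdef]
      nlinarith [mul_nonneg (mul_nonneg hs0.le ha0) ha0]
    linarith
  have hrsb : r < s * (d - a) := by
    have h1 : s * A / d ≤ s * (d - a) := by
      rw [div_le_iff₀ hdpos, hAdef]
      nlinarith [mul_nonneg (mul_nonneg hs0.le hbpos.le) hbpos.le]
    linarith
  have hra : r < a := by nlinarith
  have hrb : r < d - a := by nlinarith
  -- the straight segment
  set v := y - x with hvdef
  set γ : ℝ → EuclideanSpace ℝ (Fin n) := fun t => x + t • v with hγdef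
  have hvnorm : ‖v‖ = r := (dist_eq_norm' x y).symm
  have hderiv : ∀ t, deriv γ t = v := by
    intro t
    have h : HasDerivAt γ v t := by
      have h0 := ((hasDerivAt_id t).smul_const v).const_add x
      rw [one_smul] at h0
      exact h0
    exact h.deriv
  have hsmooth : ContDiff ℝ 1 γ := contDiff_const.add (contDiff_id.smul contDiff_const)
  have hγ0 : γ 0 = x := by simp [hγdef]
  have hγ1 : γ 1 = y := by simp [hγdef, hvdef]
  have hdistt : ∀ t ∈ Set.Icc (0:ℝ) 1, dist (γ t) x = t * r := by
    intro t ht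
    rw [dist_eq_norm]
    simp [hγdef, norm_smul, abs_of_nonneg ht.1, hvnorm]
  have hmem : ∀ t ∈ Set.Icc (0:ℝ) 1, γ t ∈ D := by
    intro t ht
    apply hball
    rw [Metric.mem_ball, hdistt t ht]
    nlinarith [ht.1, ht.2]
  -- lower bound on eta along the segment
  have hlow : ∀ t ∈ Set.Icc (0:ℝ) 1,
      A - d * r * t ≤ etaD D (γ t) ∧ 0 < A - d * r * t := by
    intro t ht
    have htr0 : 0 ≤ t * r := mul_nonneg ht.1 hr0
    have htr1 : t * r ≤ r := by nlinarith [ht.2]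
    set δt := Metric.infDist (γ t) (frontier D) with hδtdef
    have h1 : a - t * r ≤ δt := by
      have := Metric.infDist_le_infDist_add_dist (x := x) (y := γ t) (s := frontier D)
      rw [dist_comm, hdistt t ht] at this
      linarith [this]
    have h2 : δt ≤ a + t * r := by
      have := Metric.infDist_le_infDist_add_dist (x := γ t) (y := x) (s := frontier D)
      rw [hdistt t ht] at this
      linarith [this]
    have pos1 : 0 < a - t * r := by linarith
    have pos2 : 0 < (d - a) - t * r := by linarith
    have hmul : (a - t * r) * ((d - a) - t * r) ≤ δt * (d - δt) :=
      mul_le_mul h1 (by linarith) (le_of_lt pos2) (by linarith)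
    have heq : etaD D (γ t) = δt * (d - δt) := rfl
    constructor
    · rw [heq]
      nlinarith [sq_nonneg (t * r)]
    · nlinarith [mul_nonneg (mul_nonneg hd0 hr0) ht.1]
  -- length of the segment
  have hmL : mLength D γ = ∫ t in (0:ℝ)..1, d * r / etaD D (γ t) := by
    unfold mLength
    rw [← hd]
    apply intervalIntegral.integral_congr
    intro t _
    show (d / etaD D (γ t)) * ‖deriv γ t‖ = d * r / etaD D (γ t)
    rw [hderiv t, hvnorm]
    ring
  have hne : ∀ t ∈ Set.uIcc (0:ℝ) 1, (0:ℝ) < etaD D (γ t) := by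
    intro t ht
    rw [Set.uIcc_of_le zero_le_one] at ht
    linarith [(hlow t ht).1, (hlow t ht).2]
  have hcont_eta : Continuous fun t => etaD D (γ t) := by
    have hc : Continuous γ := hsmooth.continuous
    have h1 : Continuous fun t => Metric.infDist (γ t) (frontier D) :=
      (Metric.continuous_infDist_pt _).comp hc
    exact h1.mul (continuous_const.sub h1)
  have hint_f : IntervalIntegrable (fun t => d * r / etaD D (γ t))
      MeasureTheory.volume 0 1 := by
    apply ContinuousOn.intervalIntegrable
    exact ContinuousOn.div continuousOn_const hcont_eta.continuousOn
      fun t ht => ne_of_gt (hne t ht)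
  have hgne : ∀ t ∈ Set.uIcc (0:ℝ) 1, (0:ℝ) < A - d * r * t := by
    intro t ht
    rw [Set.uIcc_of_le zero_le_one] at ht
    exact (hlow t ht).2
  have hint_g : IntervalIntegrable (fun t => d * r / (A - d * r * t))
      MeasureTheory.volume 0 1 := by
    apply ContinuousOn.intervalIntegrable
    exact ContinuousOn.div continuousOn_const
      (continuousOn_const.sub (continuousOn_const.mul continuousOn_id))
      fun t ht => ne_of_gt (hgne t ht)
  have hg_val : (∫ t in (0:ℝ)..1, d * r / (A - d * r * t))
      = Real.log A - Real.log (A - d * r) := by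
    have hderivF : ∀ t ∈ Set.uIcc (0:ℝ) 1,
        HasDerivAt (fun t => -Real.log (A - d * r * t)) (d * r / (A - d * r * t)) t := by
      intro t ht
      have h1 : HasDerivAt (fun t : ℝ => A - d * r * t) (-(d * r)) t := by
        simpa using ((hasDerivAt_id t).const_mul (d * r)).const_sub A
      have h2 := (h1.log (ne_of_gt (hgne t ht))).neg
      have h3 : d * r / (A - d * r * t) = -(-(d * r) / (A - d * r * t)) := by ring
      rw [h3]
      exact h2
    rw [intervalIntegral.integral_eq_sub_of_hasDerivAt hderivF hint_g]
    simp
    ring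
  have hmono : mLength D γ ≤ Real.log A - Real.log (A - d * r) := by
    rw [hmL, ← hg_val]
    apply intervalIntegral.integral_mono_on zero_le_one hint_f hint_g
    intro t ht
    have h1 := (hlow t ht).1
    have h2 := (hlow t ht).2
    gcongr
  -- mDist ≤ length of the segment
  have hstep1 : mDist D x y ≤ mLength D γ := by
    apply csInf_le
    · refine ⟨0, ?_⟩
      rintro L ⟨γ', h1, h2, h3, h4, rfl⟩
      apply intervalIntegral.integral_nonneg zero_le_one
      intro t ht
      exact mul_nonneg (div_nonneg Metric.diam_nonneg (heta_nonneg _ (h4 t ht)))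
        (norm_nonneg _)
    · exact ⟨γ, hsmooth.contDiffOn, hγ0, hγ1, hmem, rfl⟩
  -- positivity of etaD D y
  have hynf : y ∉ frontier D := by
    intro hc
    rw [hopen.frontier_eq] at hc
    exact hc.2 hy
  have hδy : 0 < Metric.infDist y (frontier D) :=
    (isClosed_frontier.notMem_iff_infDist_pos hfne).1 hynf
  set δy := Metric.infDist y (frontier D) with hδydef
  obtain ⟨q, hqf, hqd⟩ := exists_mem_frontier_infDist_compl_eq_dist hy hproper
  have hyle : δy ≤ Metric.infDist y Dᶜ := hqd ▸ Metric.infDist_le_dist_of_mem hqf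
  have hbally : Metric.ball y δy ⊆ D :=
    (Metric.ball_subset_ball hyle).trans Metric.ball_infDist_compl_subset
  haveI : NeZero n := ⟨by omega⟩
  obtain ⟨v0, hv0⟩ := exists_ne (0 : EuclideanSpace ℝ (Fin n))
  have hv0n : 0 < ‖v0‖ := norm_pos_iff.2 hv0
  have h2δ : 2 * δy ≤ d := by
    by_contra hcon
    push_neg at hcon
    obtain ⟨c, hc1, hc2⟩ : ∃ c, d / 2 < c ∧ c < δy :=
      ⟨(d / 2 + δy) / 2, by linarith, by linarith⟩
    have hc0 : 0 < c := by linarith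
    set w := (c / ‖v0‖) • v0 with hwdef
    have hwn : ‖w‖ = c := by
      rw [hwdef, norm_smul, Real.norm_eq_abs, abs_of_pos (by positivity : (0:ℝ) < c / ‖v0‖)]
      field_simp
    have h1 : y + w ∈ D := by
      apply hbally
      rw [Metric.mem_ball, dist_eq_norm]
      simpa [hwn] using hc2
    have h2 : y - w ∈ D := by
      apply hbally
      rw [Metric.mem_ball, dist_eq_norm]
      simpa [hwn] using hc2
    have h3 : dist (y + w) (y - w) ≤ d := Metric.dist_le_diam_of_mem hbdd h1 h2
    have h4 : dist (y + w) (y - w) = 2 * c := by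
      rw [dist_eq_norm]
      have heqw : y + w - (y - w) = (2:ℝ) • w := by
        rw [two_smul]; abel
      rw [heqw, norm_smul, hwn]
      simp
    rw [h4] at h3
    linarith
  have hηy : 0 < etaD D y := by
    have heq : etaD D y = δy * (d - δy) := rfl
    rw [heq]
    have : δy < d := by linarith
    exact mul_pos hδy (by linarith)
  -- final log estimate
  set u := d * r / A with hudef
  have hu0 : 0 ≤ u := by positivity
  have hus : u ≤ s := by
    rw [hudef, div_le_iff₀ hApos]
    nlinarith
  have h1u : 0 < 1 - u := by linarith
  have hlogeq : Real.log A - Real.log (A - d * r) = -Real.log (1 - u) := by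
    have hAdr : A - d * r = A * (1 - u) := by
      rw [hudef]; field_simp
    rw [hAdr, Real.log_mul (ne_of_gt hApos) (ne_of_gt h1u)]
    ring
  have hkey : -Real.log (1 - u) ≤ (1 / (1 - s)) * Real.log (1 + u) :=
    key_log hu0 hus hs1
  have hzeta : Real.log (1 + u) ≤ zetaD D x y := by
    unfold zetaD
    rw [← hd, ← hrdef]
    have hmin_pos : 0 < min (etaD D x) (etaD D y) := lt_min (hAeq ▸ hApos) hηy
    have hminA : min (etaD D x) (etaD D y) ≤ A := hAeq ▸ min_le_left _ _
    apply Real.log_le_log (by positivity)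
    rw [hudef]
    gcongr
  have hfinal : Real.log A - Real.log (A - d * r) ≤ (1 / (1 - s)) * zetaD D x y := by
    rw [hlogeq]
    refine hkey.trans ?_
    apply mul_le_mul_of_nonneg_left hzeta
    have : 0 < 1 - s := by linarith
    positivity
  linarith
end

section
/- Let D ⊊ ℝⁿ be a bounded domain with diameter d, let x ∈ D and s > 0. Then the ζ_D-metric ball B_ζ(x,s) = {y ∈ D : ζ_D(x,y) < s} satisfies B(x, r) ∩ D ⊂ B_ζ(x, s) ⊂ B(x, R), where r = (1 − e^{−s})·η(x)/d and R = (e^s − 1)·η(x)/d. -/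
lemma ball_subset_of_infDist {n : ℕ} {D : Set (EuclideanSpace ℝ (Fin n))}
    (hopen : IsOpen D) {z : EuclideanSpace ℝ (Fin n)} (hz : z ∈ D) :
    Metric.ball z (Metric.infDist z (frontier D)) ⊆ D := by
  set δ := Metric.infDist z (frontier D)
  have hball : Metric.ball z δ ⊆ D ∪ (closure D)ᶜ := by
    intro w hw
    by_cases hwD : w ∈ D
    · exact Or.inl hwD
    · right
      intro hwc
      have hwf : w ∈ frontier D := ⟨hwc, by rwa [hopen.interior_eq]⟩
      have : δ ≤ dist z w := Metric.infDist_le_dist_of_mem hwf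
      rw [Metric.mem_ball, dist_comm] at hw
      linarith
  rcases (convex_ball z δ).isPreconnected.subset_or_subset hopen
      (isClosed_closure.isOpen_compl)
      (Set.disjoint_left.2 fun a ha hac => hac (subset_closure ha)) hball with h | h
  · exact h
  · rcases le_or_gt δ 0 with hδ | hδ
    · simp [Metric.ball_eq_empty.2 hδ]
    · exact absurd (h (Metric.mem_ball_self hδ)) (by simp [subset_closure hz])

lemma delta_facts {n : ℕ} (hn : 2 ≤ n) {D : Set (EuclideanSpace ℝ (Fin n))}
    (hopen : IsOpen D) (hproper : D ≠ Set.univ) (hbdd : Bornology.IsBounded D)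
    {z : EuclideanSpace ℝ (Fin n)} (hz : z ∈ D) :
    0 < deltaD D z ∧ 2 * deltaD D z ≤ Metric.diam D := by
  have hfne : (frontier D).Nonempty :=
    nonempty_frontier_iff.2 ⟨⟨z, hz⟩, hproper⟩
  have hznf : z ∉ frontier D := by
    intro h
    exact h.2 (by rwa [hopen.interior_eq])
  have hδpos : 0 < deltaD D z :=
    (isClosed_frontier.notMem_iff_infDist_pos hfne).1 hznf
  refine ⟨hδpos, ?_⟩
  set δ := deltaD D z with hδdef
  by_contra hcon
  push_neg at hcon
  set d := Metric.diam D
  have hd0 : 0 ≤ d := Metric.diam_nonneg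
  set r : ℝ := (d + 2 * δ) / 4 with hr
  have hrδ : r < δ := by rw [hr]; linarith
  have hr0 : 0 < r := by rw [hr]; linarith
  set v : EuclideanSpace ℝ (Fin n) := EuclideanSpace.single (⟨0, by omega⟩ : Fin n) (1 : ℝ) with hv
  have hnv : ‖v‖ = 1 := by rw [hv, EuclideanSpace.norm_single]; norm_num
  have hmem : ∀ t : ℝ, |t| < δ → z + t • v ∈ D := by
    intro t ht
    apply ball_subset_of_infDist hopen hz
    rw [Metric.mem_ball, dist_eq_norm]
    simpa [norm_smul, hnv, hδdef, deltaD] using ht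
  have h1 : z + r • v ∈ D := hmem r (by rwa [abs_of_pos hr0])
  have h2 : z + (-r) • v ∈ D := hmem (-r) (by rwa [abs_neg, abs_of_pos hr0])
  have hdist : dist (z + r • v) (z + (-r) • v) = 2 * r := by
    rw [dist_eq_norm]
    have : z + r • v - (z + (-r) • v) = (2 * r) • v := by
      rw [neg_smul]; abel_nf; module
    rw [this, norm_smul, hnv]
    simp [abs_of_pos hr0]
  have := Metric.dist_le_diam_of_mem hbdd h1 h2
  rw [hdist] at this
  rw [hr] at this
  linarith

theorem stmt_18 {n : ℕ} (hn : 2 ≤ n) (D : Set (EuclideanSpace ℝ (Fin n)))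
    (hopen : IsOpen D) (hconn : IsConnected D) (hproper : D ≠ Set.univ)
    (hbdd : Bornology.IsBounded D)
    (x : EuclideanSpace ℝ (Fin n)) (hx : x ∈ D) (s : ℝ) (hs : 0 < s) :
    Metric.ball x ((1 - Real.exp (-s)) * etaD D x / Metric.diam D) ∩ D ⊆
        {y ∈ D | zetaD D x y < s} ∧
      {y ∈ D | zetaD D x y < s} ⊆
        Metric.ball x ((Real.exp s - 1) * etaD D x / Metric.diam D) := by
  obtain ⟨hδx, hδxd⟩ := delta_facts hn hopen hproper hbdd hx
  set d := Metric.diam D with hd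
  have hd0 : 0 < d := lt_of_lt_of_le (by linarith) hδxd
  have hηx : 0 < etaD D x := by
    apply mul_pos hδx; linarith
  have hes : 1 < Real.exp s := by
    rw [← Real.exp_zero]; exact Real.exp_lt_exp.2 hs
  have hens : Real.exp (-s) < 1 := by
    rw [← Real.exp_zero]; exact Real.exp_lt_exp.2 (by linarith)
  have hens0 : 0 < Real.exp (-s) := Real.exp_pos _
  constructor
  · rintro y ⟨hyb, hyD⟩
    obtain ⟨hδy, hδyd⟩ := delta_facts hn hopen hproper hbdd hyD
    have hηy : 0 < etaD D y := by apply mul_pos hδy; linarith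
    refine ⟨hyD, ?_⟩
    rw [Metric.mem_ball, dist_comm] at hyb
    have hddist : d * dist x y < (1 - Real.exp (-s)) * etaD D x := by
      rw [lt_div_iff₀ hd0] at hyb
      nlinarith
    -- lower bound on etaD D y
    have hlip : deltaD D x ≤ deltaD D y + dist x y := Metric.infDist_le_infDist_add_dist
    have hlip' : deltaD D y ≤ deltaD D x + dist x y := by
      rw [dist_comm]; exact Metric.infDist_le_infDist_add_dist
    have hdist0 : (0:ℝ) ≤ dist x y := dist_nonneg
    have hηylb : etaD D x - d * dist x y ≤ etaD D y := by
      unfold etaD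
      nlinarith [mul_nonneg (sub_nonneg.2 hlip')
        (by linarith : (0:ℝ) ≤ d - deltaD D x - deltaD D y),
        mul_nonneg (sub_nonneg.2 hlip)
        (by linarith : (0:ℝ) ≤ d - deltaD D x - deltaD D y)]
    set m := min (etaD D x) (etaD D y) with hm
    have hmlb : Real.exp (-s) * etaD D x < m := by
      have h1 : Real.exp (-s) * etaD D x < etaD D x - d * dist x y := by nlinarith
      exact lt_min (by nlinarith) (lt_of_lt_of_le h1 hηylb)
    have hm0 : 0 < m := lt_trans (by positivity) hmlb
    have key : 1 + d * dist x y / m < Real.exp s := by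
      have h2 : d * dist x y < (Real.exp s - 1) * m := by
        have hse : (Real.exp s - 1) * (Real.exp (-s) * etaD D x)
            = (1 - Real.exp (-s)) * etaD D x := by
          have : Real.exp s * Real.exp (-s) = 1 := by
            rw [← Real.exp_add]; simp
          nlinarith
        have : (Real.exp s - 1) * (Real.exp (-s) * etaD D x)
            < (Real.exp s - 1) * m := by
          apply mul_lt_mul_of_pos_left hmlb; linarith
        linarith
      have h3 : d * dist x y / m < Real.exp s - 1 := (div_lt_iff₀ hm0).2 (by linarith)
      linarith
    show Real.log (1 + d * dist x y / m) < s
    calc Real.log (1 + d * dist x y / m) < Real.log (Real.exp s) := by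
          apply Real.log_lt_log (by positivity) key
      _ = s := Real.log_exp s
  · rintro y ⟨hyD, hyz⟩
    obtain ⟨hδy, hδyd⟩ := delta_facts hn hopen hproper hbdd hyD
    have hηy : 0 < etaD D y := by apply mul_pos hδy; linarith
    set m := min (etaD D x) (etaD D y) with hm
    have hm0 : 0 < m := lt_min hηx hηy
    have hdist0 : (0:ℝ) ≤ dist x y := dist_nonneg
    have hyz : Real.log (1 + d * dist x y / m) < s := hyz
    have h1 : 1 + d * dist x y / m < Real.exp s := by
      rw [← Real.exp_log (x := 1 + d * dist x y / m) (by positivity)]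
      exact Real.exp_lt_exp.2 hyz
    have h2 : d * dist x y < (Real.exp s - 1) * m := by
      have h1' : d * dist x y / m < Real.exp s - 1 := by linarith
      calc d * dist x y = d * dist x y / m * m := by field_simp
        _ < (Real.exp s - 1) * m := mul_lt_mul_of_pos_right h1' hm0
    have h3 : d * dist x y < (Real.exp s - 1) * etaD D x := by
      calc d * dist x y < (Real.exp s - 1) * m := h2
        _ ≤ (Real.exp s - 1) * etaD D x := by
          apply mul_le_mul_of_nonneg_left (min_le_left _ _); linarith
    rw [Metric.mem_ball, dist_comm]
    rw [lt_div_iff₀ hd0]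
    linarith
end

section
/- Let D ⊊ ℝⁿ be a bounded domain with diameter d, and let x, y ∈ D with y ∈ B(x, δ(x)) and d·|x−y| < η(x). Then log(1 + d·|x−y|/(η(x) + d·|x−y|)) ≤ ζ_D(x,y) ≤ log(1 + d·|x−y|/(η(x) − d·|x−y|)). Consequently, lim_{y→x} ζ_D(x,y)/|x−y| = d/η(x). -/
open Metric Filter Set Real

theorem stmt_19 {n : ℕ} (hn : 2 ≤ n) (D : Set (EuclideanSpace ℝ (Fin n)))
    (hopen : IsOpen D) (hconn : IsConnected D) (hproper : D ≠ Set.univ)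
    (hbdd : Bornology.IsBounded D)
    (x : EuclideanSpace ℝ (Fin n)) (hx : x ∈ D) :
    (∀ y ∈ D, y ∈ Metric.ball x (deltaD D x) →
      Metric.diam D * dist x y < etaD D x →
      Real.log (1 + Metric.diam D * dist x y /
          (etaD D x + Metric.diam D * dist x y)) ≤ zetaD D x y ∧
        zetaD D x y ≤ Real.log (1 + Metric.diam D * dist x y /
          (etaD D x - Metric.diam D * dist x y))) ∧
    Filter.Tendsto (fun y => zetaD D x y / dist x y)
      (nhdsWithin x (D \ {x})) (nhds (Metric.diam D / etaD D x)) := by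
  set d := Metric.diam D with hdset
  -- basic facts
  have hfr : (frontier D).Nonempty := nonempty_frontier_iff.mpr ⟨⟨x, hx⟩, hproper⟩
  have hδpos : ∀ z ∈ D, 0 < deltaD D z := by
    intro z hz
    have hnot : z ∉ frontier D := fun h => h.2 (by rwa [hopen.interior_eq])
    exact (isClosed_frontier.notMem_iff_infDist_pos hfr).1 hnot
  have hball : ∀ z ∈ D, Metric.ball z (deltaD D z) ⊆ D := by
    intro z hz
    set r := deltaD D z with hr
    have hdisj : Metric.ball z r ∩ frontier D = ∅ := by
      ext w
      simp only [Set.mem_inter_iff, Metric.mem_ball, Set.mem_empty_iff_false, iff_false, not_and]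
      intro hw hwf
      have hle : r ≤ dist z w := Metric.infDist_le_dist_of_mem hwf
      rw [dist_comm] at hw
      exact absurd hle (by linarith)
    by_contra hsub
    obtain ⟨y, hyb, hyD⟩ : ∃ y ∈ Metric.ball z r, y ∉ D := by
      simpa [Set.subset_def] using hsub
    have hpre : IsPreconnected (Metric.ball z r) := (convex_ball z r).isPreconnected
    have hy' : y ∈ (closure D)ᶜ := by
      intro hyc
      have hyf : y ∈ frontier D := ⟨hyc, by rwa [hopen.interior_eq]⟩
      exact absurd (Set.mem_inter hyb hyf) (by rw [hdisj]; exact id)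
    have := hpre D (closure D)ᶜ hopen isClosed_closure.isOpen_compl
      (fun w hw => by
        by_cases hwD : w ∈ D
        · exact Or.inl hwD
        · right; intro hwc
          have hwf : w ∈ frontier D := ⟨hwc, by rwa [hopen.interior_eq]⟩
          exact absurd (Set.mem_inter hw hwf) (by rw [hdisj]; exact id))
      ⟨z, Metric.mem_ball_self (hδpos z hz), hz⟩ ⟨y, hyb, hy'⟩
    obtain ⟨w, _, hw1, hw2⟩ := this
    exact hw2 (subset_closure hw1)
  have h2δ : ∀ z ∈ D, 2 * deltaD D z ≤ d := by
    intro z hz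
    have i0 : Fin n := ⟨0, by omega⟩
    set e : EuclideanSpace ℝ (Fin n) := EuclideanSpace.single i0 (1:ℝ) with he
    have hne : ‖e‖ = 1 := by simp [he, EuclideanSpace.norm_single]
    set r := deltaD D z with hr
    have key : ∀ c : ℝ, 0 < c → c < r → 2 * c ≤ d := by
      intro c hc0 hcr
      have ha : z + c • e ∈ Metric.ball z r := by
        rw [Metric.mem_ball, dist_eq_norm]
        simp [norm_smul, hne, abs_of_pos hc0]
        linarith
      have hb : z - c • e ∈ Metric.ball z r := by
        rw [Metric.mem_ball, dist_eq_norm]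
        simp [norm_smul, hne, abs_of_pos hc0]
        linarith
      have hdab : dist (z + c • e) (z - c • e) = 2 * c := by
        rw [dist_eq_norm]
        have heq : (z + c • e) - (z - c • e) = (2 * c) • e := by module
        rw [heq, norm_smul, hne]
        simp [abs_of_pos hc0]
      calc 2 * c = dist (z + c • e) (z - c • e) := hdab.symm
        _ ≤ d := Metric.dist_le_diam_of_mem hbdd (hball z hz ha) (hball z hz hb)
    have : r ≤ d / 2 := by
      refine le_of_forall_lt_imp_le_of_dense fun c hc => ?_
      rcases le_or_gt c 0 with h | h
      · have := Metric.diam_nonneg (s := D); linarith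
      · have := key c h hc; linarith
    linarith
  have hδled : ∀ z ∈ D, deltaD D z ≤ d := fun z hz => by
    have h1 := h2δ z hz; have h2 := (hδpos z hz).le; linarith
  have hηpos : ∀ z ∈ D, 0 < etaD D z := by
    intro z hz
    have h1 := hδpos z hz
    have h2 := h2δ z hz
    exact mul_pos h1 (by linarith)
  have hηx : 0 < etaD D x := hηpos x hx
  have hδx : 0 < deltaD D x := hδpos x hx
  have hd : 0 < d := lt_of_lt_of_le (by linarith) (h2δ x hx)
  -- Lipschitz bound on eta
  have hδlip : ∀ y z : EuclideanSpace ℝ (Fin n), |deltaD D y - deltaD D z| ≤ dist y z := by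
    intro y z
    have h := (Metric.lipschitz_infDist_pt (frontier D)).dist_le_mul y z
    rw [Real.dist_eq] at h
    show |Metric.infDist y (frontier D) - Metric.infDist z (frontier D)| ≤ dist y z
    simpa using h
  have hηlip : ∀ y ∈ D, etaD D x - d * dist x y ≤ etaD D y := by
    intro y hy
    have habs := hδlip x y
    have h1 := abs_le.1 habs
    have hx0 := (hδpos x hx).le
    have hy0 := (hδpos y hy).le
    have hxd := hδled x hx
    have hyd := hδled y hy
    have hr0 : (0:ℝ) ≤ dist x y := dist_nonneg
    rw [etaD, etaD]
    set a := deltaD D x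
    set b := deltaD D y
    set r := dist x y
    nlinarith [mul_nonneg (sub_nonneg.2 h1.2) (by linarith : (0:ℝ) ≤ d + (d - a - b)),
      mul_nonneg (by linarith : (0:ℝ) ≤ r + (a - b)) (by linarith : (0:ℝ) ≤ d - (d - a - b))]
  -- continuity of eta
  have hηcont : Continuous (etaD D) := by
    have hδcont : Continuous (deltaD D) := Metric.continuous_infDist_pt (frontier D)
    exact hδcont.mul (continuous_const.sub hδcont)
  constructor
  · -- Part 1
    intro y hy _ hlt
    set t := d * dist x y with ht
    have ht0 : 0 ≤ t := mul_nonneg hd.le dist_nonneg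
    have hηy : etaD D x - t ≤ etaD D y := hηlip y hy
    have hmin_lb : etaD D x - t ≤ min (etaD D x) (etaD D y) :=
      le_min (by linarith) hηy
    have hmin_ub : min (etaD D x) (etaD D y) ≤ etaD D x := min_le_left _ _
    have hminpos : 0 < min (etaD D x) (etaD D y) := lt_of_lt_of_le (by linarith) hmin_lb
    rw [zetaD]
    constructor
    · apply Real.log_le_log (by positivity)
      have : t / (etaD D x + t) ≤ t / min (etaD D x) (etaD D y) := by
        apply div_le_div_of_nonneg_left ht0 hminpos
        linarith
      linarith
    · apply Real.log_le_log (by positivity)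
      have : t / min (etaD D x) (etaD D y) ≤ t / (etaD D x - t) := by
        apply div_le_div_of_nonneg_left ht0 (by linarith)
        exact hmin_lb
      linarith
  · -- Part 2
    set m : EuclideanSpace ℝ (Fin n) → ℝ := fun y => min (etaD D x) (etaD D y) with hm
    set g : EuclideanSpace ℝ (Fin n) → ℝ := fun y => d * dist x y / m y with hg
    have hmcont : Continuous m := continuous_const.min hηcont
    have hmx : m x = etaD D x := by simp [hm]
    have hmT : Filter.Tendsto m (nhds x) (nhds (etaD D x)) := by
      have := hmcont.tendsto x
      rwa [hmx] at this
    have hg0 : Filter.Tendsto g (nhds x) (nhds 0) := by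
      have h1 : Filter.Tendsto (fun y => d * dist x y) (nhds x) (nhds (d * dist x x)) :=
        (continuous_const.mul (continuous_const.dist continuous_id)).tendsto x
      have := h1.div hmT hηx.ne'
      simpa using (show Filter.Tendsto g _ _ from this)
    have hevmin : ∀ᶠ y in nhdsWithin x (D \ {x}), 0 < m y :=
      nhdsWithin_le_nhds (hmT.eventually (eventually_gt_nhds hηx))
    have hevne : ∀ᶠ y in nhdsWithin x (D \ {x}), y ≠ x := by
      filter_upwards [self_mem_nhdsWithin] with y hy
      exact fun h => hy.2 (by simp [h])
    have hevg : ∀ᶠ y in nhdsWithin x (D \ {x}), 0 < g y := by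
      filter_upwards [hevmin, hevne] with y h1 h2
      have : 0 < dist x y := dist_pos.2 (Ne.symm h2)
      exact div_pos (mul_pos hd this) h1
    -- eventual equality
    have heveq : (fun y => zetaD D x y / dist x y) =ᶠ[nhdsWithin x (D \ {x})]
        fun y => (Real.log (1 + g y) / g y) * (d / m y) := by
      filter_upwards [hevmin, hevne, hevg] with y h1 h2 h3
      have hdy : (0:ℝ) < dist x y := dist_pos.2 (Ne.symm h2)
      have hzeta : zetaD D x y = Real.log (1 + g y) := rfl
      rw [hzeta]
      rw [div_mul_div_comm]
      have hgm : g y * m y = d * dist x y := div_mul_cancel₀ _ h1.ne'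
      rw [hgm]
      rw [mul_comm (Real.log (1 + g y)) d, mul_div_mul_left _ _ hd.ne']
    -- tendsto of the rhs
    have hslope : Filter.Tendsto (fun u : ℝ => Real.log (1 + u) / u)
        (nhdsWithin 0 {0}ᶜ) (nhds 1) := by
      have hder : HasDerivAt (fun u : ℝ => Real.log (1 + u)) 1 0 := by
        have h := ((hasDerivAt_id (0:ℝ)).const_add 1).log (by norm_num)
        simpa using h
      have := hasDerivAt_iff_tendsto_slope.1 hder
      refine this.congr fun u => ?_
      simp [slope_def_field]
    have hgto : Filter.Tendsto g (nhdsWithin x (D \ {x})) (nhdsWithin 0 {0}ᶜ) := by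
      rw [tendsto_nhdsWithin_iff]
      refine ⟨hg0.mono_left nhdsWithin_le_nhds, ?_⟩
      filter_upwards [hevg] with y h
      exact h.ne'
    have hA : Filter.Tendsto (fun y => Real.log (1 + g y) / g y)
        (nhdsWithin x (D \ {x})) (nhds 1) := hslope.comp hgto
    have hB : Filter.Tendsto (fun y => d / m y) (nhdsWithin x (D \ {x}))
        (nhds (d / etaD D x)) :=
      (tendsto_const_nhds.div (hmT.mono_left nhdsWithin_le_nhds) hηx.ne')
    have := hA.mul hB
    rw [one_mul] at this
    exact this.congr' heveq.symm
end
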